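/- Suppose r ≥ 2 and n ≥ 1. Then for every j ∈ {1, …, r}, E[S_j⁶] = 3(r−1)·(35n²(r²−1)² − 42n(r⁴−1) + 16(r⁴ + r² + 1))/(7 r³ (r+1)² n²), and in particular E[S_j⁶] ≤ 15. -/

import Mathlib

section
open MeasureTheory Finset Real

noncomputable section

instance instMSPerm (r : ℕ) : MeasurableSpace (Equiv.Perm (Fin r)) := ⊤

/-- The joint law of `n` independent uniformly random permutations of `{1, …, r}`:
the uniform probability measure on the finite product space. -/
def friedmanMeasure (n r : ℕ) : Measure (Fin n → Equiv.Perm (Fin r)) :=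
  (PMF.uniformOfFintype (Fin n → Equiv.Perm (Fin r))).toMeasure

/-- `ρ_i(j) = π_i(j) - (r+1)/2`, where `π_i(j) ∈ {1, …, r}` is the rank assigned by the
`i`-th permutation to treatment `j` (a permutation of `Fin r` assigns values in `{0, …, r-1}`,
hence the `+ 1`). -/
def rho (n r : ℕ) (i : Fin n) (j : Fin r) (ω : Fin n → Equiv.Perm (Fin r)) : ℝ :=
  ((ω i j : ℕ) : ℝ) + 1 - ((r : ℝ) + 1) / 2

/-- `S_j = (√12/√(r(r+1)n)) ∑_{i=1}^n ρ_i(j)`. -/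
def Sstat (n r : ℕ) (j : Fin r) (ω : Fin n → Equiv.Perm (Fin r)) : ℝ :=
  Real.sqrt 12 / Real.sqrt ((r : ℝ) * ((r : ℝ) + 1) * (n : ℝ)) * ∑ i, rho n r i j ω

/-- Friedman's statistic `F_r = ∑_{j=1}^r S_j²`. -/
def friedman (n r : ℕ) (ω : Fin n → Equiv.Perm (Fin r)) : ℝ :=
  ∑ j, (Sstat n r j ω) ^ 2

/-- The chi-square distribution with `p` degrees of freedom: the Gamma distribution
with shape `p/2` and rate `1/2`. -/
def chiSq (p : ℕ) : Measure ℝ := ProbabilityTheory.gammaMeasure ((p : ℝ) / 2) (1 / 2)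

end
end

open Finset

lemma powsums (r : ℕ) :
    (∑ v : Fin r, ((v : ℝ) + 1) = (r:ℝ) * ((r:ℝ) + 1) / 2) ∧
    (∑ v : Fin r, ((v : ℝ) + 1) ^ 2 = (r:ℝ) * ((r:ℝ) + 1) * (2 * (r:ℝ) + 1) / 6) ∧
    (∑ v : Fin r, ((v : ℝ) + 1) ^ 3 = ((r:ℝ) * ((r:ℝ) + 1) / 2) ^ 2) ∧
    (∑ v : Fin r, ((v : ℝ) + 1) ^ 4
      = (r:ℝ) * ((r:ℝ) + 1) * (2 * (r:ℝ) + 1) * (3 * (r:ℝ) ^ 2 + 3 * (r:ℝ) - 1) / 30) ∧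
    (∑ v : Fin r, ((v : ℝ) + 1) ^ 5
      = (r:ℝ) ^ 2 * ((r:ℝ) + 1) ^ 2 * (2 * (r:ℝ) ^ 2 + 2 * (r:ℝ) - 1) / 12) ∧
    (∑ v : Fin r, ((v : ℝ) + 1) ^ 6
      = (r:ℝ) * ((r:ℝ) + 1) * (2 * (r:ℝ) + 1)
          * (3 * (r:ℝ) ^ 4 + 6 * (r:ℝ) ^ 3 - 3 * (r:ℝ) + 1) / 42) := by
  induction r with
  | zero => norm_num
  | succ r ih =>
    obtain ⟨h1, h2, h3, h4, h5, h6⟩ := ih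
    refine ⟨?_, ?_, ?_, ?_, ?_, ?_⟩ <;>
      · rw [Fin.sum_univ_castSucc]
        simp only [Fin.coe_castSucc, Fin.val_last]
        first
          | rw [h1] | rw [h2] | rw [h3] | rw [h4] | rw [h5] | rw [h6]
        push_cast
        ring

/-- central sums: `∑_{v ∈ Fin r} (v + 1 - (r+1)/2)^k` for k = 0..6. -/
lemma gsums (r : ℕ) :
    (∑ _v : Fin r, (1:ℝ) = (r:ℝ)) ∧
    (∑ v : Fin r, ((v : ℝ) + 1 - ((r:ℝ) + 1) / 2) = 0) ∧
    (∑ v : Fin r, ((v : ℝ) + 1 - ((r:ℝ) + 1) / 2) ^ 2 = (r:ℝ) * ((r:ℝ) ^ 2 - 1) / 12) ∧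
    (∑ v : Fin r, ((v : ℝ) + 1 - ((r:ℝ) + 1) / 2) ^ 3 = 0) ∧
    (∑ v : Fin r, ((v : ℝ) + 1 - ((r:ℝ) + 1) / 2) ^ 4
      = (r:ℝ) * ((r:ℝ) ^ 2 - 1) * (3 * (r:ℝ) ^ 2 - 7) / 240) ∧
    (∑ v : Fin r, ((v : ℝ) + 1 - ((r:ℝ) + 1) / 2) ^ 5 = 0) ∧
    (∑ v : Fin r, ((v : ℝ) + 1 - ((r:ℝ) + 1) / 2) ^ 6
      = (r:ℝ) * ((r:ℝ) ^ 2 - 1) * (3 * (r:ℝ) ^ 4 - 18 * (r:ℝ) ^ 2 + 31) / 1344) := by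
  obtain ⟨h1, h2, h3, h4, h5, h6⟩ := powsums r
  have h0 : ∑ _v : Fin r, (1:ℝ) = (r:ℝ) := by simp
  set c : ℝ := ((r:ℝ) + 1) / 2 with hc
  have h1' : ∑ x : Fin r, ((x:ℕ):ℝ) = (r:ℝ) * ((r:ℝ) + 1) / 2 - (r:ℝ) := by
    rw [Finset.sum_add_distrib, h0] at h1; linarith
  refine ⟨h0, ?_, ?_, ?_, ?_, ?_, ?_⟩
  · rw [Finset.sum_congr rfl (fun (v : Fin r) _ =>
      show ((v:ℝ) + 1 - c) = ((v:ℝ)+1) + (-c) * 1 by ring)]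
    rw [Finset.sum_add_distrib, h1, ← Finset.mul_sum, h0, hc]; ring
  · rw [Finset.sum_congr rfl (fun (v : Fin r) _ =>
      show ((v:ℝ) + 1 - c) ^ 2
        = ((v:ℝ)+1)^2 + (-2*c) * ((v:ℝ)+1) + c^2 * 1 by ring)]
    rw [Finset.sum_add_distrib, Finset.sum_add_distrib, h2, ← Finset.mul_sum, h1,
      ← Finset.mul_sum, h0, hc]; ring
  · rw [Finset.sum_congr rfl (fun (v : Fin r) _ =>
      show ((v:ℝ) + 1 - c) ^ 3
        = ((v:ℝ)+1)^3 + (-3*c) * ((v:ℝ)+1)^2 + (3*c^2) * ((v:ℝ)+1) + (-c^3) * 1 by ring)]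
    simp only [Finset.sum_add_distrib, ← Finset.mul_sum]
    rw [h3, h2, h1', h0, hc]; ring
  · rw [Finset.sum_congr rfl (fun (v : Fin r) _ =>
      show ((v:ℝ) + 1 - c) ^ 4
        = ((v:ℝ)+1)^4 + (-4*c) * ((v:ℝ)+1)^3 + (6*c^2) * ((v:ℝ)+1)^2
          + (-4*c^3) * ((v:ℝ)+1) + c^4 * 1 by ring)]
    simp only [Finset.sum_add_distrib, ← Finset.mul_sum]
    rw [h4, h3, h2, h1', h0, hc]; ring
  · rw [Finset.sum_congr rfl (fun (v : Fin r) _ =>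
      show ((v:ℝ) + 1 - c) ^ 5
        = ((v:ℝ)+1)^5 + (-5*c) * ((v:ℝ)+1)^4 + (10*c^2) * ((v:ℝ)+1)^3
          + (-10*c^3) * ((v:ℝ)+1)^2 + (5*c^4) * ((v:ℝ)+1) + (-c^5) * 1 by ring)]
    simp only [Finset.sum_add_distrib, ← Finset.mul_sum]
    rw [h5, h4, h3, h2, h1', h0, hc]; ring
  · rw [Finset.sum_congr rfl (fun (v : Fin r) _ =>
      show ((v:ℝ) + 1 - c) ^ 6
        = ((v:ℝ)+1)^6 + (-6*c) * ((v:ℝ)+1)^5 + (15*c^2) * ((v:ℝ)+1)^4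
          + (-20*c^3) * ((v:ℝ)+1)^3 + (15*c^4) * ((v:ℝ)+1)^2 + (-6*c^5) * ((v:ℝ)+1)
          + c^6 * 1 by ring)]
    simp only [Finset.sum_add_distrib, ← Finset.mul_sum]
    rw [h6, h5, h4, h3, h2, h1', h0, hc]; ring


lemma sum_perm_apply {r : ℕ} (j : Fin r) (f : Fin r → ℝ) :
    (r : ℝ) * ∑ π : Equiv.Perm (Fin r), f (π j)
      = (r.factorial : ℝ) * ∑ v : Fin r, f v := by
  have hfib : ∀ v w : Fin r, (univ.filter fun π : Equiv.Perm (Fin r) => π j = v).card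
      = (univ.filter fun π : Equiv.Perm (Fin r) => π j = w).card := by
    intro v w
    apply Finset.card_bij (fun π _ => Equiv.swap v w * π)
    · intro π hπ
      simp only [Finset.mem_filter, Finset.mem_univ, true_and] at hπ ⊢
      simp [Equiv.Perm.mul_apply, hπ]
    · intro a _ b _ hab; exact mul_left_cancel hab
    · intro σ hσ
      simp only [Finset.mem_filter, Finset.mem_univ, true_and] at hσ
      refine ⟨Equiv.swap v w * σ, ?_, ?_⟩
      · simp [Equiv.Perm.mul_apply, hσ]
      · rw [← mul_assoc, Equiv.swap_mul_self, one_mul]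
  have key : ∀ v : Fin r,
      r * (univ.filter fun π : Equiv.Perm (Fin r) => π j = v).card = r.factorial := by
    intro v
    have htot : ∑ w : Fin r, (univ.filter fun π : Equiv.Perm (Fin r) => π j = w).card
        = r.factorial := by
      rw [← Finset.card_eq_sum_card_fiberwise (fun π _ => Finset.mem_univ (π j))]
      simp [Fintype.card_perm]
    calc r * (univ.filter fun π : Equiv.Perm (Fin r) => π j = v).card
        = ∑ _w : Fin r, (univ.filter fun π : Equiv.Perm (Fin r) => π j = v).card := by
          rw [Finset.sum_const, card_univ, Fintype.card_fin, smul_eq_mul]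
      _ = ∑ w : Fin r, (univ.filter fun π : Equiv.Perm (Fin r) => π j = w).card :=
          Finset.sum_congr rfl fun w _ => hfib v w
      _ = r.factorial := htot
  have hsum : ∑ π : Equiv.Perm (Fin r), f (π j)
      = ∑ v : Fin r, ((univ.filter fun π : Equiv.Perm (Fin r) => π j = v).card : ℝ) * f v := by
    rw [← Finset.sum_fiberwise_of_maps_to (g := fun π : Equiv.Perm (Fin r) => π j)
      (fun π _ => Finset.mem_univ (π j)) (fun π => f (π j))]
    refine Finset.sum_congr rfl fun v _ => ?_
    rw [Finset.sum_congr rfl fun π hπ => ?_]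
    · rw [Finset.sum_const, nsmul_eq_mul]
    · rw [(Finset.mem_filter.mp hπ).2]
  rw [hsum, Finset.mul_sum, Finset.mul_sum]
  refine Finset.sum_congr rfl fun v _ => ?_
  rw [← mul_assoc, ← Nat.cast_mul, key v]


noncomputable section
variable (r : ℕ) (j : Fin r)

def gfun (π : Equiv.Perm (Fin r)) : ℝ := ((π j : ℕ) : ℝ) + 1 - ((r:ℝ) + 1) / 2

def Tsum (n : ℕ) (ω : Fin n → Equiv.Perm (Fin r)) : ℝ := ∑ i, gfun r j (ω i)

def Qm (m : ℕ) : ℝ := ∑ π : Equiv.Perm (Fin r), (gfun r j π) ^ m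

def Emom (k n : ℕ) : ℝ := ∑ ω : Fin n → Equiv.Perm (Fin r), (Tsum r j n ω) ^ k

lemma Tsum_cons (n : ℕ) (π : Equiv.Perm (Fin r)) (ω : Fin n → Equiv.Perm (Fin r)) :
    Tsum r j (n + 1) (Fin.cons π ω) = gfun r j π + Tsum r j n ω := by
  unfold Tsum
  rw [Fin.sum_univ_succ]
  simp [Fin.cons_zero, Fin.cons_succ]

lemma Emom_succ (k n : ℕ) :
    Emom r j k (n + 1)
      = ∑ m ∈ Finset.range (k + 1),
          Qm r j m * Emom r j (k - m) n * (k.choose m : ℝ) := by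
  unfold Emom
  rw [← Equiv.sum_comp (Fin.consEquiv fun _ => Equiv.Perm (Fin r))
    (fun ω => (Tsum r j (n+1) ω) ^ k), Fintype.sum_prod_type]
  have hce : ∀ (π : Equiv.Perm (Fin r)) (ω : Fin n → Equiv.Perm (Fin r)),
      (Fin.consEquiv fun _ => Equiv.Perm (Fin r)) (π, ω) = Fin.cons π ω := fun _ _ => rfl
  simp only [hce, Tsum_cons, add_pow]
  calc ∑ π : Equiv.Perm (Fin r), ∑ ω : Fin n → Equiv.Perm (Fin r),
        ∑ m ∈ Finset.range (k+1),
          gfun r j π ^ m * Tsum r j n ω ^ (k - m) * (k.choose m : ℝ)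
      = ∑ m ∈ Finset.range (k+1), ∑ π : Equiv.Perm (Fin r),
          ∑ ω : Fin n → Equiv.Perm (Fin r),
          gfun r j π ^ m * Tsum r j n ω ^ (k - m) * (k.choose m : ℝ) := by
        rw [Finset.sum_congr rfl fun π _ => Finset.sum_comm]
        exact Finset.sum_comm
    _ = _ := by
        refine Finset.sum_congr rfl fun m _ => ?_
        rw [show Qm r j m = ∑ π : Equiv.Perm (Fin r), gfun r j π ^ m from rfl,
          Finset.sum_mul_sum, Finset.sum_mul]
        exact Finset.sum_congr rfl fun π _ => by rw [Finset.sum_mul]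
end


lemma Qm_vals (r : ℕ) (j : Fin r) :
    Qm r j 0 = (r.factorial : ℝ) ∧
    Qm r j 1 = 0 ∧
    Qm r j 2 = (r.factorial : ℝ) * (((r:ℝ)^2 - 1) / 12) ∧
    Qm r j 3 = 0 ∧
    Qm r j 4 = (r.factorial : ℝ) * (((r:ℝ)^2 - 1) * (3*(r:ℝ)^2 - 7) / 240) ∧
    Qm r j 5 = 0 ∧
    Qm r j 6 = (r.factorial : ℝ) * (((r:ℝ)^2 - 1) * (3*(r:ℝ)^4 - 18*(r:ℝ)^2 + 31) / 1344) := by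
  obtain ⟨g0, g1, g2, g3, g4, g5, g6⟩ := gsums r
  have hr' : ((r:ℝ)) ≠ 0 := Nat.cast_ne_zero.2 j.pos.ne'
  have hQ : ∀ m : ℕ, (r:ℝ) * Qm r j m
      = (r.factorial:ℝ) * ∑ v : Fin r, ((v:ℝ) + 1 - ((r:ℝ)+1)/2) ^ m :=
    fun m => sum_perm_apply j (fun v => ((v:ℝ) + 1 - ((r:ℝ)+1)/2) ^ m)
  refine ⟨?_, ?_, ?_, ?_, ?_, ?_, ?_⟩
  · show ∑ _π : Equiv.Perm (Fin r), ((gfun r j _π) ^ 0) = _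
    simp [Fintype.card_perm, Fintype.card_fin]
  · apply mul_left_cancel₀ hr'; rw [hQ 1]; simp only [pow_one]; rw [g1]; ring
  · apply mul_left_cancel₀ hr'; rw [hQ 2, g2]; ring
  · apply mul_left_cancel₀ hr'; rw [hQ 3, g3]; ring
  · apply mul_left_cancel₀ hr'; rw [hQ 4, g4]; ring
  · apply mul_left_cancel₀ hr'; rw [hQ 5, g5]; ring
  · apply mul_left_cancel₀ hr'; rw [hQ 6, g6]; ring

lemma Emom_vals (r : ℕ) (j : Fin r) (n : ℕ) :
    Emom r j 0 n = (r.factorial:ℝ)^n ∧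
    Emom r j 1 n = 0 ∧
    Emom r j 2 n = (r.factorial:ℝ)^n * ((n:ℝ) * (((r:ℝ)^2 - 1) / 12)) ∧
    Emom r j 3 n = 0 ∧
    Emom r j 4 n = (r.factorial:ℝ)^n * ((n:ℝ) * (((r:ℝ)^2 - 1) * (3*(r:ℝ)^2 - 7) / 240)
        + 3*(n:ℝ)*((n:ℝ)-1) * (((r:ℝ)^2 - 1) / 12)^2) ∧
    Emom r j 5 n = 0 ∧
    Emom r j 6 n = (r.factorial:ℝ)^n
        * ((n:ℝ) * (((r:ℝ)^2 - 1) * (3*(r:ℝ)^4 - 18*(r:ℝ)^2 + 31) / 1344)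
          + 15*(n:ℝ)*((n:ℝ)-1) * (((r:ℝ)^2 - 1) / 12)
              * (((r:ℝ)^2 - 1) * (3*(r:ℝ)^2 - 7) / 240)
          + 15*(n:ℝ)*((n:ℝ)-1)*((n:ℝ)-2) * (((r:ℝ)^2 - 1) / 12)^3) := by
  obtain ⟨Q0, Q1, Q2, Q3, Q4, Q5, Q6⟩ := Qm_vals r j
  induction n with
  | zero =>
    refine ⟨?_, ?_, ?_, ?_, ?_, ?_, ?_⟩ <;> · simp [Emom, Tsum]
  | succ n ih =>
    obtain ⟨e0, e1, e2, e3, e4, e5, e6⟩ := ih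
    refine ⟨?_, ?_, ?_, ?_, ?_, ?_, ?_⟩
    all_goals rw [Emom_succ]; simp only [Finset.sum_range_succ, Finset.sum_range_zero]
    all_goals norm_num [show Nat.choose 4 2 = 6 from rfl, show Nat.choose 6 2 = 15 from rfl,
      show Nat.choose 6 4 = 15 from rfl]
    all_goals norm_num [Q0, Q1, Q2, Q3, Q4, Q5, Q6, e0, e1, e2, e3, e4, e5, e6]
    all_goals ring


open MeasureTheory Finset Real

lemma friedman_sixth_bound (x y : ℝ) (hx2 : 2 ≤ x) (hy1 : 1 ≤ y) :
    3 * (x - 1) * (35 * y ^ 2 * (x ^ 2 - 1) ^ 2 - 42 * y * (x ^ 4 - 1)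
      + 16 * (x ^ 4 + x ^ 2 + 1)) / (7 * x ^ 3 * (x + 1) ^ 2 * y ^ 2) ≤ 15 := by
  have hx : (0:ℝ) < x := by linarith
  have hy : (0:ℝ) < y := by linarith
  rw [div_le_iff₀ (by positivity)]
  nlinarith [sq_nonneg (x-2), sq_nonneg (y-1), sq_nonneg (x*y - 1), sq_nonneg x, sq_nonneg y,
    mul_pos hx hy, sq_nonneg ((x-1)*y), sq_nonneg ((x-2)*y),
    mul_nonneg (sub_nonneg.2 hx2) (sub_nonneg.2 hy1)]

instance instMSCPerm (r : ℕ) : MeasurableSingletonClass (Equiv.Perm (Fin r)) :=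
  ⟨fun _ => MeasurableSpace.measurableSet_top⟩

/-- **Lemma A.1 (Gaunt–Reinert).** For `r ≥ 2`, `n ≥ 1` and every `j`,
`E[S_j⁶] = 3(r−1)(35n²(r²−1)² − 42n(r⁴−1) + 16(r⁴+r²+1))/(7r³(r+1)²n²)`, and in
particular `E[S_j⁶] ≤ 15`. -/
theorem Sstat_sixth_moment (n r : ℕ) (hr : 2 ≤ r) (hn : 1 ≤ n) (j : Fin r) :
    (∫ ω, (Sstat n r j ω) ^ 6 ∂(friedmanMeasure n r)
      = 3 * ((r : ℝ) - 1) * (35 * (n : ℝ) ^ 2 * ((r : ℝ) ^ 2 - 1) ^ 2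
          - 42 * (n : ℝ) * ((r : ℝ) ^ 4 - 1) + 16 * ((r : ℝ) ^ 4 + (r : ℝ) ^ 2 + 1))
        / (7 * (r : ℝ) ^ 3 * ((r : ℝ) + 1) ^ 2 * (n : ℝ) ^ 2)) ∧
    ∫ ω, (Sstat n r j ω) ^ 6 ∂(friedmanMeasure n r) ≤ 15 := by
  have hrR : (2:ℝ) ≤ (r:ℝ) := by exact_mod_cast hr
  have hr0 : (0:ℝ) < (r:ℝ) := by linarith
  have hn0 : (0:ℝ) < (n:ℝ) := by exact_mod_cast hn
  have hK : (0:ℝ) < (r.factorial:ℝ) := by exact_mod_cast r.factorial_pos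
  have e6 := (Emom_vals r j n).2.2.2.2.2.2
  have hI : ∫ ω, (Sstat n r j ω) ^ 6 ∂(friedmanMeasure n r)
      = (((r.factorial : ℝ)) ^ n)⁻¹
        * ((Real.sqrt 12 / Real.sqrt ((r:ℝ) * ((r:ℝ) + 1) * (n:ℝ))) ^ 6 * Emom r j 6 n) := by
    rw [friedmanMeasure, PMF.integral_eq_sum]
    simp only [PMF.uniformOfFintype_apply, smul_eq_mul]
    rw [← Finset.mul_sum]
    congr 1
    · rw [ENNReal.toReal_inv]
      congr 1
      rw [show Fintype.card (Fin n → Equiv.Perm (Fin r)) = r.factorial ^ n by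
        simp [Fintype.card_fun, Fintype.card_perm, Fintype.card_fin]]
      rw [Nat.cast_pow, ENNReal.toReal_pow, ENNReal.toReal_natCast]
    · rw [Finset.sum_congr rfl fun ω _ =>
        show (Sstat n r j ω) ^ 6
          = (Real.sqrt 12 / Real.sqrt ((r:ℝ) * ((r:ℝ) + 1) * (n:ℝ))) ^ 6 * (Tsum r j n ω) ^ 6
        from by rw [show Sstat n r j ω
            = Real.sqrt 12 / Real.sqrt ((r:ℝ) * ((r:ℝ) + 1) * (n:ℝ)) * Tsum r j n ω from rfl,
          mul_pow], ← Finset.mul_sum]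
      rfl
  have h12 : (Real.sqrt 12 : ℝ) ^ 6 = 1728 := by
    rw [show (6:ℕ) = 2 * 3 from rfl, pow_mul, Real.sq_sqrt (by norm_num : (12:ℝ) ≥ 0)]
    norm_num
  have hx : (Real.sqrt ((r:ℝ) * ((r:ℝ) + 1) * (n:ℝ))) ^ 6
      = ((r:ℝ) * ((r:ℝ) + 1) * (n:ℝ)) ^ 3 := by
    rw [show (6:ℕ) = 2 * 3 from rfl, pow_mul, Real.sq_sqrt (by positivity)]
  have hformula : ∫ ω, (Sstat n r j ω) ^ 6 ∂(friedmanMeasure n r)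
      = 3 * ((r : ℝ) - 1) * (35 * (n : ℝ) ^ 2 * ((r : ℝ) ^ 2 - 1) ^ 2
          - 42 * (n : ℝ) * ((r : ℝ) ^ 4 - 1) + 16 * ((r : ℝ) ^ 4 + (r : ℝ) ^ 2 + 1))
        / (7 * (r : ℝ) ^ 3 * ((r : ℝ) + 1) ^ 2 * (n : ℝ) ^ 2) := by
    rw [hI, e6, div_pow, h12, hx]
    have h1 : ((r.factorial:ℝ)) ^ n ≠ 0 := by positivity
    have h2 : (r:ℝ) ≠ 0 := ne_of_gt hr0
    have h3 : (r:ℝ) + 1 ≠ 0 := by positivity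
    have h4 : (n:ℝ) ≠ 0 := ne_of_gt hn0
    field_simp
    ring
  refine ⟨hformula, ?_⟩
  rw [hformula]
  exact friedman_sixth_bound (r:ℝ) (n:ℝ) hrR (by exact_mod_cast hn)
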